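/- Let G be a finite group, p a prime, H a subgroup of G normalized by a p-element g of G, and Q a Sylow p-subgroup of H. Then the coset Hg contains at least |Q| p-elements, i.e., |𝔘_p(Hg)| ≥ |Q|. -/

import Mathlib

/-- `x` is a `p`-element: its order is a power of `p`. -/
def IsPElement (p : ℕ) {G : Type*} [Group G] (x : G) : Prop :=
  ∃ k : ℕ, orderOf x = p ^ k

/-- The `p`-part of a natural number `n`. -/
def pPart (p n : ℕ) : ℕ := p ^ n.factorization p

/-- If `H` is a subgroup normalized by a `p`-element `g`, and `Q` is a Sylow
`p`-subgroup of `H`, then the coset `Hg` contains at least `|Q|` `p`-elements. -/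
theorem stmt12 {G : Type*} [Group G] [Finite G] (p : ℕ) [Fact p.Prime]
    (H : Subgroup G) (g : G) (hg : g ∈ Subgroup.normalizer (H : Set G)) (hgp : IsPElement p g)
    (Q : Sylow p H) :
    Nat.card (Q : Subgroup H) ≤
      Nat.card {x : G | (∃ h ∈ H, x = h * g) ∧ IsPElement p x} := by
  obtain ⟨k, hk⟩ := hgp
  set L := H ⊔ Subgroup.zpowers g with hLdef
  have hHL : H ≤ L := le_sup_left
  have hgL : g ∈ L := Subgroup.mem_sup_right (Subgroup.mem_zpowers g)
  have hLnorm : L ≤ Subgroup.normalizer (H : Set G) :=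
    sup_le Subgroup.le_normalizer (Subgroup.zpowers_le.mpr hg)
  have hconj : ∀ (n : ℤ) (h : G), h ∈ H → g ^ n * h * (g ^ n)⁻¹ ∈ H := by
    intro n h hh
    have hgn : g ^ n ∈ Subgroup.normalizer (H : Set G) := Subgroup.zpow_mem _ hg n
    exact (Subgroup.mem_normalizer_iff.mp hgn h).mp hh
  -- every element of L has the form h * g ^ n
  have hdecomp : ∀ x ∈ L, ∃ h ∈ H, ∃ n : ℤ, x = h * g ^ n := by
    intro x hx
    rw [hLdef, Subgroup.sup_eq_closure_mul] at hx
    induction hx using Subgroup.closure_induction with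
    | mem y hy =>
      obtain ⟨a, ha, b, hb, rfl⟩ := hy
      obtain ⟨n, rfl⟩ := Subgroup.mem_zpowers_iff.mp hb
      exact ⟨a, ha, n, rfl⟩
    | one => exact ⟨1, one_mem _, 0, by simp⟩
    | mul a b _ _ iha ihb =>
      obtain ⟨h1, hh1, n1, rfl⟩ := iha
      obtain ⟨h2, hh2, n2, rfl⟩ := ihb
      refine ⟨h1 * (g ^ n1 * h2 * (g ^ n1)⁻¹), mul_mem hh1 (hconj n1 h2 hh2), n1 + n2, ?_⟩
      rw [zpow_add]
      group
    | inv a _ iha =>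
      obtain ⟨h1, hh1, n1, rfl⟩ := iha
      refine ⟨g ^ (-n1) * h1⁻¹ * (g ^ (-n1))⁻¹, hconj (-n1) h1⁻¹ (inv_mem hh1), -n1, ?_⟩
      group
  set H' := H.subgroupOf L with hH'def
  haveI hH'norm : H'.Normal := by
    constructor
    intro x hx l
    have := (Subgroup.mem_normalizer_iff.mp (hLnorm l.2) (x : G)).mp hx
    simpa [hH'def, Subgroup.mem_subgroupOf] using this
  -- the quotient L ⧸ H' is a p-group
  have hquot : IsPGroup p (L ⧸ H') := by
    intro q
    refine ⟨k, ?_⟩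
    obtain ⟨x, rfl⟩ := QuotientGroup.mk'_surjective H' q
    obtain ⟨h, hh, n, hxn⟩ := hdecomp (x : G) x.2
    have hgnL : g ^ n ∈ L := Subgroup.zpow_mem _ hgL n
    have hxg : (QuotientGroup.mk' H') x = (QuotientGroup.mk' H') ⟨g ^ n, hgnL⟩ := by
      apply QuotientGroup.eq.mpr
      have : ((x⁻¹ * ⟨g ^ n, hgnL⟩ : L) : G) = (g ^ n)⁻¹ * h⁻¹ * g ^ n := by
        push_cast
        rw [hxn]
        group
      rw [hH'def, Subgroup.mem_subgroupOf, this]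
      have := hconj (-n) h⁻¹ (inv_mem hh)
      simpa [zpow_neg] using this
    rw [hxg, ← map_pow]
    convert map_one (QuotientGroup.mk' H')
    ext
    push_cast
    rw [← zpow_natCast, ← zpow_mul, mul_comm, zpow_mul, zpow_natCast, ← hk,
      pow_orderOf_eq_one, one_zpow]
  -- index of H' in L is a power of p
  obtain ⟨m, hm⟩ : ∃ m : ℕ, H'.index = p ^ m := by
    obtain ⟨m, hm⟩ := IsPGroup.iff_card.mp hquot
    exact ⟨m, by rwa [Subgroup.index_eq_card]⟩
  -- cardinalities
  have hcardH' : Nat.card H' = Nat.card H :=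
    Nat.card_congr (Subgroup.subgroupOfEquivOfLe hHL).toEquiv
  have hcardL : Nat.card H * p ^ m = Nat.card L := by
    rw [← hcardH', ← hm]; exact Subgroup.card_mul_index H'
  set a := (Nat.card H).factorization p with hadef
  have hp : p.Prime := Fact.out
  have hHpos : 0 < Nat.card H := Nat.card_pos
  have hfactL : (Nat.card L).factorization p = a + m := by
    rw [← hcardL, Nat.factorization_mul hHpos.ne' (pow_pos hp.pos m).ne',
      Nat.Prime.factorization_pow hp]
    simp [hadef]
  -- Sylow subgroup of L containing g
  have hgpL : IsPGroup p (Subgroup.zpowers (⟨g, hgL⟩ : L)) := by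
    apply IsPGroup.of_card
    rw [Nat.card_zpowers, Subgroup.orderOf_mk, hk]
  obtain ⟨S, hS⟩ := hgpL.exists_le_sylow
  have hgS : (⟨g, hgL⟩ : L) ∈ S := hS (Subgroup.mem_zpowers _)
  have hcardS : Nat.card S = p ^ (a + m) := by
    rw [Sylow.card_eq_multiplicity, hfactL]
  -- T = H' ∩ S, viewed inside S
  set T := H'.subgroupOf (S : Subgroup L) with hTdef
  have hTindex : T.index ∣ p ^ m := by
    rw [← hm]
    exact Subgroup.relIndex_dvd_index_of_normal H' (S : Subgroup L)
  obtain ⟨j, hjm, hj⟩ := (Nat.dvd_prime_pow hp).mp hTindex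
  have hcardT : Nat.card T * p ^ j = p ^ (a + m) := by
    rw [← hj, Subgroup.card_mul_index T, hcardS]
  have hQT : Nat.card (Q : Subgroup H) ≤ Nat.card T := by
    have hQcard : Nat.card (Q : Subgroup H) = p ^ a := Sylow.card_eq_multiplicity Q
    have h1 : Nat.card T * p ^ j = (p ^ a * p ^ (m - j)) * p ^ j := by
      rw [hcardT, ← pow_add, ← pow_add]
      congr 1
      omega
    have h2 : Nat.card T = p ^ a * p ^ (m - j) :=
      Nat.eq_of_mul_eq_mul_right (pow_pos hp.pos j) h1
    rw [hQcard, h2]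
    exact Nat.le_mul_of_pos_right _ (pow_pos hp.pos _)
  refine hQT.trans ?_
  -- injection from T into the p-elements of the coset H * g
  have hSp : IsPGroup p (S : Subgroup L) := S.2
  set f : T → {x : G | (∃ h ∈ H, x = h * g) ∧ IsPElement p x} := fun x =>
    ⟨(((x : S) : L) : G) * g, by
      constructor
      · exact ⟨(((x : S) : L) : G), x.2, rfl⟩
      · obtain ⟨j', hj'⟩ := IsPGroup.iff_orderOf.mp hSp ((x : S) * ⟨⟨g, hgL⟩, hgS⟩)
        refine ⟨j', ?_⟩
        have h1 : ((((x : S) * ⟨⟨g, hgL⟩, hgS⟩ : S) : L) : G) = (((x : S) : L) : G) * g := rfl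
        rw [← h1, Subgroup.orderOf_coe, Subgroup.orderOf_coe, hj']⟩ with hfdef
  have hfinj : Function.Injective f := by
    intro x y hxy
    have : (((x : S) : L) : G) * g = (((y : S) : L) : G) * g := congrArg Subtype.val hxy
    have := mul_right_cancel this
    ext
    exact this
  exact Nat.card_le_card_of_injective f hfinj
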